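/- Over F_q, for n ≥ 2 and 1 ≤ i ≤ ⌊(n−1)/2⌋, there exists an injective map φ from the set of monic irreducible polynomials of degree i (excluding x) to the set of monic irreducible polynomials of degree n−i such that the products {g·φ(g)} are pairwise coprime elements of S_n and are pairwise coprime to all irreducible polynomials of degree n. -/

import Mathlib

open Polynomial IntermediateField

namespace PairAux

lemma geomsum_le (q k : ℕ) (hq : 2 ≤ q) (hk : 1 ≤ k) :
    (∑ e ∈ Finset.Icc 1 k, q ^ e) + q ≤ 2 * q ^ k := by
  induction k with
  | zero => omega
  | succ k ih =>
    rcases Nat.eq_or_lt_of_le hk with h | h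
    · simp [← h]; omega
    · have hk1 : 1 ≤ k := by omega
      rw [Finset.sum_Icc_succ_top (by omega)]
      have hp : 0 < q ^ k := Nat.pow_pos (by omega)
      have h1 : q ^ (k+1) = q * q ^ k := by ring
      nlinarith [ih hk1]

lemma L1 (q a b : ℕ) (hq : 2 ≤ q) (ha : 1 ≤ a) (hab : a ≤ b) :
    b * q ^ a + a ≤ a * q ^ b + b := by
  induction b with
  | zero => omega
  | succ b ih =>
    rcases Nat.eq_or_lt_of_le hab with h | h
    · subst h; omega
    · have hab' : a ≤ b := by omega
      have ihb := ih hab'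
      have h1 : q ^ a ≤ q ^ b := Nat.pow_le_pow_right (by omega) hab'
      have hp : 0 < q ^ b := Nat.pow_pos (by omega)
      have h2 : q ^ (b+1) = q * q ^ b := by ring
      have h3 := Nat.mul_le_mul_left (a * q ^ b) hq
      have h4 : q ^ b ≤ a * q ^ b := Nat.le_mul_of_pos_left _ (by omega)
      nlinarith

lemma L3 (q M k : ℕ) (hq : 2 ≤ q) (hM : 1 ≤ M) (hk : 1 ≤ k) (hk2 : 2*k ≤ M+1) :
    (M+1) * q ^ M + 2 * M * q ^ k ≤ M * q ^ (M+1) + M * q + (M+1) := by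
  rcases (show M = 1 ∨ M = 2 ∨ M = 3 ∨ 4 ≤ M by omega) with h | h | h | h
  · subst h
    have : k = 1 := by omega
    subst this; norm_num; nlinarith
  · subst h
    have : k = 1 := by omega
    subst this; norm_num
    nlinarith [pow_pos (show 0 < q by omega) 3, pow_pos (show 0 < q by omega) 2,
      sq_nonneg q, sq_nonneg (q-1)]
  · subst h
    have hk' : k = 1 ∨ k = 2 := by omega
    have e0 : q ^ 1 ≤ q ^ 2 := Nat.pow_le_pow_right (by omega) (by omega)
    rcases hk' with h | h <;> subst h <;> norm_num <;>
      nlinarith [pow_pos (show 0 < q by omega) 4, pow_pos (show 0 < q by omega) 3,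
        pow_pos (show 0 < q by omega) 2, e0]
  · obtain ⟨L, rfl⟩ : ∃ L, M = L + 4 := ⟨M - 4, by omega⟩
    have e1 : q ^ k ≤ q ^ (L+2) := Nat.pow_le_pow_right (by omega) (by omega)
    have e2 : 2 * (L+4) * q ^ k ≤ (L+4) * q ^ (L+3) := by
      calc 2 * (L+4) * q ^ k ≤ 2 * (L+4) * q ^ (L+2) := Nat.mul_le_mul_left _ e1
        _ = (L+4) * 2 * q ^ (L+2) := by ring
        _ ≤ (L+4) * q * q ^ (L+2) := Nat.mul_le_mul_right _ (Nat.mul_le_mul_left _ hq)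
        _ = (L+4) * q ^ (L+3) := by ring
    have e3 : (L+5) * q ^ (L+4) + (L+4) * q ^ (L+3) ≤ (L+4) * q ^ (L+5) := by
      have h1 : q ^ (L+4) = q ^ (L+3) * q := by ring
      have h2 : q ^ (L+5) = q ^ (L+3) * q ^ 2 := by ring
      have hq2 : (L+4) * (2*q) ≤ (L+4) * q ^ 2 := by
        have : 2 * q ≤ q ^ 2 := by nlinarith
        exact Nat.mul_le_mul_left _ this
      have hL : L ≤ L * q := Nat.le_mul_of_pos_right L (by omega)
      have key : (L+5) * q + (L+4) ≤ (L+4) * q ^ 2 := by nlinarith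
      calc (L+5) * (q ^ (L+3) * q) + (L+4) * q ^ (L+3)
          = ((L+5) * q + (L+4)) * q ^ (L+3) := by ring
        _ ≤ ((L+4) * q ^ 2) * q ^ (L+3) := Nat.mul_le_mul_right _ key
        _ = (L+4) * q ^ (L+5) := by rw [h2]; ring
    have e4 : L + 4 + 1 = L + 5 := by omega
    rw [e4]
    calc (L+5) * q ^ (L+4) + 2 * (L+4) * q ^ k
        ≤ (L+5) * q ^ (L+4) + (L+4) * q ^ (L+3) := Nat.add_le_add_left e2 _
      _ ≤ (L+4) * q ^ (L+5) := e3
      _ ≤ (L+4) * q ^ (L+5) + ((L+4) * q + (L+5)) := Nat.le_add_right _ _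
      _ = (L+4) * q ^ (L+5) + (L+4) * q + (L+5) := by ring

lemma MAIN (q i m : ℕ) (hq : 2 ≤ q) (hi : 1 ≤ i) (him : i + 1 ≤ m) :
    m * q ^ i + 2 * i * q ^ (m / 2) ≤ i * q ^ m + i * q + m := by
  obtain ⟨M, rfl⟩ : ∃ M, m = M + 1 := ⟨m - 1, by omega⟩
  have hM : 1 ≤ M := by omega
  have h1 := L1 q i M hq hi (by omega)
  have h3 := L3 q M ((M+1)/2) hq hM (by omega) (by omega)
  have key := Nat.add_le_add (Nat.mul_le_mul_left (M+1) h1) (Nat.mul_le_mul_left i h3)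
  have goalM : M * ((M+1) * q ^ i + 2 * i * q ^ ((M+1) / 2)) ≤
      M * (i * q ^ (M+1) + i * q + (M+1)) := by linarith
  exact Nat.le_of_mul_le_mul_left goalM (by omega)

variable {F : Type*} [Field F] [Fintype F]

lemma fd_ne_zero (d : ℕ) (hd : 1 ≤ d) : (X ^ (Fintype.card F) ^ d - X : F[X]) ≠ 0 :=
  FiniteField.X_pow_card_sub_X_ne_zero F (Nat.one_lt_pow (by omega) Fintype.one_lt_card)

lemma fd_natDegree (d : ℕ) (hd : 1 ≤ d) : (X ^ (Fintype.card F) ^ d - X : F[X]).natDegree = (Fintype.card F) ^ d :=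
  FiniteField.X_pow_card_sub_X_natDegree_eq F (Nat.one_lt_pow (by omega) Fintype.one_lt_card)

lemma fd_dvd {d N : ℕ} (hdN : d ∣ N) :
    (X ^ (Fintype.card F) ^ d - X : F[X]) ∣ X ^ (Fintype.card F) ^ N - X := by
  set q := Fintype.card F with hq
  have hq1 : 1 ≤ q := Fintype.card_pos
  obtain ⟨c, rfl⟩ := hdN
  have h1 : q ^ d - 1 ∣ q ^ (d * c) - 1 := by
    have := Nat.sub_dvd_pow_sub_pow (q ^ d) 1 c
    rwa [one_pow, ← pow_mul] at this
  obtain ⟨t, ht⟩ := h1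
  have hqd : 1 ≤ q ^ d := Nat.one_le_pow _ _ (by omega)
  have hqN : 1 ≤ q ^ (d * c) := Nat.one_le_pow _ _ (by omega)
  have e1 : ∀ a : ℕ, 1 ≤ a → (X : F[X]) ^ a - X = X * (X ^ (a - 1) - 1) := by
    intro a ha
    rw [mul_sub, mul_one, ← pow_succ']
    congr 2
    omega
  rw [e1 _ hqd, e1 _ hqN]
  apply mul_dvd_mul_left
  have := sub_dvd_pow_sub_pow ((X : F[X]) ^ (q ^ d - 1)) 1 t
  rwa [one_pow, ← pow_mul, ← ht] at this

lemma irred_dvd_fd {g : F[X]} (hm : g.Monic) (hirr : Irreducible g) :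
    g ∣ X ^ (Fintype.card F) ^ g.natDegree - X := by
  haveI : Fact (Irreducible g) := ⟨hirr⟩
  have hg0 : g ≠ 0 := hirr.ne_zero
  let pb := AdjoinRoot.powerBasis hg0
  haveI : Module.Finite F (AdjoinRoot g) := Module.Finite.of_basis pb.basis
  haveI : Finite (AdjoinRoot g) := Module.finite_of_finite F
  haveI : Fintype (AdjoinRoot g) := Fintype.ofFinite _
  have hcard : Fintype.card (AdjoinRoot g) = Fintype.card F ^ g.natDegree := by
    rw [Module.card_fintype pb.basis, Fintype.card_fin]
    congr 1
  have hroot : (aeval (AdjoinRoot.root g)) ((X ^ (Fintype.card F) ^ g.natDegree - X : F[X])) = 0 := by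
    rw [map_sub, map_pow, aeval_X, ← hcard, FiniteField.pow_card, sub_self]
  have hmin : minpoly F (AdjoinRoot.root g) = g := by
    rw [AdjoinRoot.minpoly_root hg0, hm.leadingCoeff, inv_one, map_one, mul_one]
  conv_lhs => rw [← hmin]
  exact minpoly.dvd F _ hroot

variable {K : Type*} [Field K] [Algebra F K] [DecidableEq K]

lemma mem_fdroots {d : ℕ} (hd : 1 ≤ d) (x : K) :
    x ∈ ((X ^ (Fintype.card F) ^ d - X : F[X]).map (algebraMap F K)).roots.toFinset
      ↔ x ^ (Fintype.card F) ^ d = x := by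
  have h0 : ((X ^ (Fintype.card F) ^ d - X : F[X]).map (algebraMap F K)) ≠ 0 :=
    (Polynomial.map_ne_zero_iff (algebraMap F K).injective).mpr (fd_ne_zero d hd)
  rw [Multiset.mem_toFinset, mem_roots h0, IsRoot.def]
  simp [Polynomial.map_sub, Polynomial.map_pow, sub_eq_zero]

lemma card_fdroots_le (d : ℕ) (hd : 1 ≤ d) :
    (((X ^ (Fintype.card F) ^ d - X : F[X]).map (algebraMap F K)).roots.toFinset).card
      ≤ (Fintype.card F) ^ d := by
  refine (Multiset.toFinset_card_le _).trans ((card_roots' _).trans ?_)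
  rw [natDegree_map, fd_natDegree d hd]

lemma minpoly_deg_dvd [FiniteDimensional F K] {x : K} {d : ℕ} (hd : 1 ≤ d)
    (hx : x ^ (Fintype.card F) ^ d = x) :
    (minpoly F x).natDegree ∣ d ∧ x ^ (Fintype.card F) ^ (minpoly F x).natDegree = x := by
  set q := Fintype.card F with hqdef
  have hq : 1 < q := Fintype.one_lt_card
  set p := ringChar F with hpdef
  haveI hchF : CharP F p := ringChar.charP F
  obtain ⟨s, hps, hcard⟩ := FiniteField.card F p
  haveI : Fact p.Prime := ⟨hps⟩
  haveI : CharP K p := charP_of_injective_algebraMap (algebraMap F K).injective p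
  haveI : Finite K := Module.finite_of_finite F
  have hint : IsIntegral F x := .of_finite F x
  set e := (minpoly F x).natDegree with hedef
  have he : 1 ≤ e := minpoly.natDegree_pos hint
  -- injectivity of Frobenius powers
  have hinj : ∀ (c : ℕ) (y z : K), y ^ q ^ c = z ^ q ^ c → y = z := by
    intro c y z h
    have hqc : (q : ℕ) ^ c = p ^ (s * c) := by rw [hqdef, hcard, ← pow_mul]
    have h2 := sub_pow_char_pow (p := p) y z (s * c)
    rw [← hqc, h, sub_self] at h2
    have h3 : y - z = 0 := by
      have hne : q ^ c ≠ 0 := by positivity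
      exact pow_eq_zero_iff hne |>.mp h2
    exact sub_eq_zero.mp h3
  -- Step A : x ^ q ^ e = x
  have stepA : x ^ q ^ e = x := by
    haveI : FiniteDimensional F F⟮x⟯ := adjoin.finiteDimensional hint
    haveI : Finite F⟮x⟯ := Module.finite_of_finite F
    haveI : Fintype F⟮x⟯ := Fintype.ofFinite _
    have hcardE : Fintype.card F⟮x⟯ = q ^ e := by
      rw [Module.card_fintype (Module.finBasis F F⟮x⟯), Fintype.card_fin,
        adjoin.finrank hint, hqdef]
    have hgen := FiniteField.pow_card (AdjoinSimple.gen F x)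
    rw [hcardE] at hgen
    have := congrArg (algebraMap F⟮x⟯ K) hgen
    rwa [map_pow, IntermediateField.algebraMap_apply, AdjoinSimple.coe_gen] at this
  -- multiplicative closure
  have hmul : ∀ a, x ^ q ^ a = x → ∀ k, x ^ q ^ (a * k) = x := by
    intro a ha k
    induction k with
    | zero => simp
    | succ k ih =>
      have h1 : q ^ (a * (k+1)) = q ^ (a * k) * q ^ a := by rw [← pow_add]; ring_nf
      rw [h1, pow_mul, ih, ha]
  -- gcd closure
  have hgcd : ∀ a b : ℕ, x ^ q ^ a = x → x ^ q ^ b = x → x ^ q ^ (Nat.gcd a b) = x := by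
    intro a b
    induction a, b using Nat.gcd.induction with
    | H0 b => intro _ hb; simpa using hb
    | H1 a b hapos ih =>
      intro hxa hxb
      have hmod : x ^ q ^ (b % a) = x := by
        have h1 : x ^ q ^ (a * (b / a)) = x := hmul a hxa _
        have h2 : (x ^ q ^ (b % a)) ^ q ^ (a * (b / a)) = x := by
          rw [← pow_mul, ← pow_add, Nat.mod_add_div]
          exact hxb
        exact hinj _ _ _ (by rw [h2, h1])
      rw [Nat.gcd_rec]
      exact ih hmod hxa
  set g := Nat.gcd e d with hgdef
  have hg1 : 1 ≤ g := Nat.gcd_pos_of_pos_left d he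
  have hgfix : x ^ q ^ g = x := hgcd e d stepA hx
  -- all of F⟮x⟯ is fixed by the g-th Frobenius power
  have hfix : ∀ y : K, y ∈ F⟮x⟯ → y ^ q ^ g = y := by
    intro y hy
    have hy' : y ∈ Algebra.adjoin F ({x} : Set K) := by
      rw [← adjoin_simple_toSubalgebra_of_isAlgebraic hint.isAlgebraic]
      exact hy
    rw [Algebra.adjoin_singleton_eq_range_aeval] at hy'
    obtain ⟨P, rfl⟩ := hy'
    have hqg : q ^ g = p ^ (s * g) := by rw [hqdef, hcard, ← pow_mul]
    have hψ : ∀ z : K, iterateFrobenius K p (s * g) z = z ^ q ^ g := fun z => by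
      rw [iterateFrobenius_def, hqg]
    calc (aeval x P) ^ q ^ g = iterateFrobenius K p (s * g) (aeval x P) := (hψ _).symm
      _ = eval₂ ((iterateFrobenius K p (s * g)).comp (algebraMap F K))
            (iterateFrobenius K p (s * g) x) P := by rw [aeval_def, hom_eval₂]
      _ = eval₂ (algebraMap F K) x P := by
          congr 1
          · ext a
            rw [RingHom.comp_apply, hψ, ← map_pow]
            congr 1
            rw [hqdef]
            exact FiniteField.pow_card_pow g a
          · rw [hψ, hgfix]
      _ = aeval x P := (aeval_def x P).symm
  -- counting : q ^ e ≤ q ^ g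
  haveI : FiniteDimensional F F⟮x⟯ := adjoin.finiteDimensional hint
  haveI : Finite F⟮x⟯ := Module.finite_of_finite F
  haveI : Fintype F⟮x⟯ := Fintype.ofFinite _
  have hcardE : Fintype.card F⟮x⟯ = q ^ e := by
    rw [Module.card_fintype (Module.finBasis F F⟮x⟯), Fintype.card_fin,
      adjoin.finrank hint, hqdef]
  set T := ((X ^ q ^ g - X : F[X]).map (algebraMap F K)).roots.toFinset with hT
  have hmapT : ∀ y : F⟮x⟯, (y : K) ∈ T := fun y => by
    rw [hT, hqdef]
    exact (mem_fdroots hg1 _).mpr (by rw [← hqdef]; exact hfix _ y.2)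
  have hinj2 : Function.Injective (fun y : F⟮x⟯ => (⟨(y : K), hmapT y⟩ : {z // z ∈ T})) := by
    intro a b hab
    simp only [Subtype.mk.injEq] at hab
    exact Subtype.ext hab
  have hle : q ^ e ≤ q ^ g := by
    rw [← hcardE]
    calc Fintype.card F⟮x⟯ ≤ Fintype.card {z // z ∈ T} := Fintype.card_le_of_injective _ hinj2
      _ = T.card := Fintype.card_coe T
      _ ≤ q ^ g := by rw [hT, hqdef]; exact card_fdroots_le g hg1
  have heg : e ≤ g := (Nat.pow_le_pow_iff_right hq).mp hle
  have hge : g ≤ e := Nat.gcd_le_left d he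
  have : e = g := le_antisymm heg hge
  exact ⟨this ▸ Nat.gcd_dvd_right e d, stepA⟩


lemma eval_zero_ne {F : Type*} [Field F] {g : F[X]} (hm : g.Monic) (hirr : Irreducible g)
    (hne : g ≠ X) : g.eval 0 ≠ 0 := by
  intro h0
  have hdvd : (X : F[X]) ∣ g := by simpa using dvd_iff_isRoot.mpr h0
  exact hne (eq_of_monic_of_associated monic_X hm
    (irreducible_X.associated_of_dvd hirr hdvd)).symm

lemma exists_finsets (F : Type*) [Field F] [Fintype F] (i m : ℕ) (hi : 1 ≤ i)
    (him : i + 1 ≤ m) :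
    ∃ A B : Finset F[X],
      (↑A = {g : F[X] | g.Monic ∧ Irreducible g ∧ g.natDegree = i ∧ g ≠ X}) ∧
      (∀ g ∈ B, g.Monic ∧ Irreducible g ∧ g.natDegree = m) ∧ A.card ≤ B.card := by
  classical
  set q := Fintype.card F with hqdef
  have hq : 2 ≤ q := Fintype.one_lt_card
  set N := i * m with hNdef
  have hm2 : 2 ≤ m := by omega
  have hN : 1 ≤ N := Nat.mul_pos (by omega) (by omega)
  have hiN : i ∣ N := ⟨m, rfl⟩
  have hmN : m ∣ N := ⟨i, mul_comm i m⟩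
  set f : F[X] := X ^ q ^ N - X with hfdef
  set K := f.SplittingField with hKdef
  haveI : FiniteDimensional F K := by infer_instance
  set ι := algebraMap F K with hιdef
  -- char p facts
  obtain ⟨s, hps, hcard⟩ := FiniteField.card F (ringChar F)
  haveI : Fact (ringChar F).Prime := ⟨hps⟩
  have hpq : ∀ d : ℕ, 1 ≤ d → (ringChar F) ∣ q ^ d := by
    intro d hd
    calc (ringChar F) ∣ q := by
          rw [hqdef, hcard]; exact dvd_pow_self _ (by exact_mod_cast s.ne_zero)
      _ ∣ q ^ d := dvd_pow_self _ (by omega)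
  have hsep : ∀ d : ℕ, 1 ≤ d → (X ^ q ^ d - X : F[X]).Separable := fun d hd =>
    galois_poly_separable (ringChar F) (q ^ d) (hpq d hd)
  have hsplits : ∀ d : ℕ, 1 ≤ d → d ∣ N → Splits ((X ^ q ^ d - X : F[X]).map ι) := fun d hd hdvd =>
    (SplittingField.splits f).of_dvd ((Polynomial.map_ne_zero_iff ι.injective).mpr (fd_ne_zero N hN))
      (Polynomial.map_dvd ι (fd_dvd hdvd))
  set R : ℕ → Finset K := fun d => ((X ^ q ^ d - X : F[X]).map ι).roots.toFinset with hRdef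
  have hmemR : ∀ d : ℕ, 1 ≤ d → ∀ x : K, x ∈ R d ↔ x ^ q ^ d = x := fun d hd x =>
    mem_fdroots hd x
  have hcardRle : ∀ d : ℕ, 1 ≤ d → (R d).card ≤ q ^ d := fun d hd => card_fdroots_le d hd
  have hcardR : ∀ d : ℕ, 1 ≤ d → d ∣ N → (R d).card = q ^ d := by
    intro d hd hdvd
    have h1 : ((X ^ q ^ d - X : F[X]).map ι).roots.Nodup := nodup_roots ((hsep d hd).map)
    have h2 := (hsplits d hd hdvd).natDegree_eq_card_roots
    rw [natDegree_map, fd_natDegree d hd] at h2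
    simp only [hRdef]
    rw [Multiset.toFinset_card_of_nodup h1, ← h2]
  -- root sets of monic irreducibles
  set Rt : F[X] → Finset K := fun g => ((g.map ι).roots).toFinset with hRtdef
  have hgdvdfd : ∀ g : F[X], g.Monic → Irreducible g → g.natDegree ∣ N →
      g ∣ X ^ q ^ N - X := by
    intro g hgm hgi hdvd
    exact dvd_trans (irred_dvd_fd hgm hgi) (fd_dvd hdvd)
  have hRtmem : ∀ g : F[X], ∀ x : K, x ∈ Rt g ↔ (g.map ι ≠ 0 ∧ aeval x g = 0) := by
    intro g x
    simp only [hRtdef, Multiset.mem_toFinset, mem_roots', IsRoot.def, aeval_def, eval_map]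
    exact Iff.rfl
  have hRtminpoly : ∀ g : F[X], g.Monic → Irreducible g → ∀ x : K, x ∈ Rt g →
      minpoly F x = g := by
    intro g hgm hgi x hx
    exact ((minpoly.eq_of_irreducible_of_monic hgi ((hRtmem g x).mp hx).2 hgm)).symm
  have hRtcard : ∀ g : F[X], g.Monic → Irreducible g → g.natDegree ∣ N →
      (Rt g).card = g.natDegree := by
    intro g hgm hgi hdvd
    have hsplitsg : Splits (g.map ι) :=
      (SplittingField.splits f).of_dvd ((Polynomial.map_ne_zero_iff ι.injective).mpr (fd_ne_zero N hN))
        (Polynomial.map_dvd ι (hgdvdfd g hgm hgi hdvd))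
    have h1 : ((g.map ι)).roots.Nodup :=
      nodup_roots ((PerfectField.separable_of_irreducible hgi).map)
    have h2 := hsplitsg.natDegree_eq_card_roots
    simp only [hRtdef]
    rw [Multiset.toFinset_card_of_nodup h1, ← h2, natDegree_map]
  have hRtsub : ∀ g : F[X], g.Monic → Irreducible g → ∀ d : ℕ, g.natDegree = d → d ∣ N →
      Rt g ⊆ R d := by
    intro g hgm hgi d hdeg hdvd
    have hdvd2 : g ∣ X ^ q ^ d - X := hdeg ▸ irred_dvd_fd hgm hgi
    have : (g.map ι) ∣ ((X ^ q ^ d - X : F[X]).map ι) := Polynomial.map_dvd ι hdvd2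
    have hle := roots.le_of_dvd ((Polynomial.map_ne_zero_iff ι.injective).mpr
      (fd_ne_zero d (by
        have : 1 ≤ g.natDegree := hgi.natDegree_pos
        omega))) this
    exact Multiset.toFinset_subset.mpr (Multiset.subset_of_le hle)
  -- integrality
  have hintK : ∀ x : K, IsIntegral F x := fun x => .of_finite F x
  -- the finsets
  set μ : K → F[X] := fun x => minpoly F x with hμdef
  set 𝒜 : Finset K := ((R i).erase 0).filter (fun x => (μ x).natDegree = i) with h𝒜def
  set ℬ : Finset K := (R m).filter (fun x => (μ x).natDegree = m) with hℬdef
  set A : Finset F[X] := 𝒜.image μ with hAdef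
  set B : Finset F[X] := ℬ.image μ with hBdef
  refine ⟨A, B, ?_, ?_, ?_⟩
  · -- set characterization of A
    ext g
    simp only [hAdef, Finset.coe_image, Set.mem_image, Finset.mem_coe, Set.mem_setOf_eq]
    constructor
    · rintro ⟨x, hx, rfl⟩
      simp only [h𝒜def, Finset.mem_filter, Finset.mem_erase] at hx
      obtain ⟨⟨hx0, _⟩, hdeg⟩ := hx
      refine ⟨minpoly.monic (hintK x), minpoly.irreducible (hintK x), hdeg, ?_⟩
      intro hX
      have h0' := minpoly.aeval F x
      rw [show minpoly F x = μ x from rfl, hX, aeval_X] at h0'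
      exact hx0 h0'
    · rintro ⟨hgm, hgi, hdeg, hgX⟩
      have hRtc : (Rt g).card = i := by rw [hRtcard g hgm hgi (hdeg ▸ hiN), hdeg]
      have : (Rt g).Nonempty := by rw [← Finset.card_pos, hRtc]; omega
      obtain ⟨x, hx⟩ := this
      have hxmin : μ x = g := hRtminpoly g hgm hgi x hx
      have hxR : x ∈ R i := hRtsub g hgm hgi i hdeg hiN hx
      have hx0 : x ≠ 0 := by
        intro h0
        have hroot : aeval x g = 0 := ((hRtmem g x).mp hx).2
        rw [h0, aeval_def, eval₂_at_zero] at hroot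
        exact eval_zero_ne hgm hgi hgX (by
          have : ι (g.eval 0) = 0 := by
            rw [← hroot]; rw [hιdef]; simp [Polynomial.coeff_zero_eq_eval_zero]
          exact (_root_.map_eq_zero ι).mp this)
      refine ⟨x, ?_, hxmin⟩
      simp only [h𝒜def, Finset.mem_filter, Finset.mem_erase]
      exact ⟨⟨hx0, hxR⟩, by rw [hxmin, hdeg]⟩
  · -- B is monic irreducibles of degree m
    intro g hg
    simp only [hBdef, Finset.mem_image] at hg
    obtain ⟨x, hx, rfl⟩ := hg
    simp only [hℬdef, Finset.mem_filter] at hx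
    exact ⟨minpoly.monic (hintK x), minpoly.irreducible (hintK x), hx.2⟩
  · -- cardinality comparison
    -- fibers over A have size exactly i
    have hAset : ∀ g ∈ A, g.Monic ∧ Irreducible g ∧ g.natDegree = i ∧ g ≠ X := by
      intro g hg
      simp only [hAdef, Finset.mem_image] at hg
      obtain ⟨x, hx, rfl⟩ := hg
      simp only [h𝒜def, Finset.mem_filter, Finset.mem_erase] at hx
      refine ⟨minpoly.monic (hintK x), minpoly.irreducible (hintK x), hx.2, ?_⟩
      intro hX
      have h0' := minpoly.aeval F x
      rw [show minpoly F x = μ x from rfl, hX, aeval_X] at h0'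
      exact hx.1.1 h0'
    have hfiberA : ∀ g ∈ A, (𝒜.filter (fun x => μ x = g)).card = i := by
      intro g hg
      obtain ⟨hgm, hgi, hdeg, hgX⟩ := hAset g hg
      have hfe : 𝒜.filter (fun x => μ x = g) = Rt g := by
        ext x
        simp only [Finset.mem_filter, h𝒜def, Finset.mem_erase]
        constructor
        · rintro ⟨⟨⟨hx0, hxR⟩, hdegx⟩, hxg⟩
          rw [hRtmem]
          refine ⟨(Polynomial.map_ne_zero_iff ι.injective).mpr hgi.ne_zero, ?_⟩
          rw [← hxg]
          exact minpoly.aeval F x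
        · intro hx
          have hxmin : μ x = g := hRtminpoly g hgm hgi x hx
          have hxR : x ∈ R i := hRtsub g hgm hgi i hdeg hiN hx
          have hx0 : x ≠ 0 := by
            intro h0
            have hroot : aeval x g = 0 := ((hRtmem g x).mp hx).2
            rw [h0, aeval_def, eval₂_at_zero, Polynomial.coeff_zero_eq_eval_zero] at hroot
            exact eval_zero_ne hgm hgi hgX ((_root_.map_eq_zero ι).mp hroot)
          exact ⟨⟨⟨hx0, hxR⟩, by rw [hxmin, hdeg]⟩, hxmin⟩
      rw [hfe, hRtcard g hgm hgi (hdeg ▸ hiN), hdeg]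
    have hAcount : 𝒜.card = A.card * i := by
      rw [Finset.card_eq_sum_card_image μ 𝒜, ← hAdef,
        Finset.sum_congr rfl hfiberA, Finset.sum_const, smul_eq_mul]
    have hAle : A.card * i + 1 ≤ q ^ i := by
      have h0R : (0 : K) ∈ R i := by
        rw [hmemR i hi]
        exact zero_pow (by positivity)
      have h1 : 𝒜.card ≤ ((R i).erase 0).card := Finset.card_le_card (Finset.filter_subset _ _)
      have h2 : ((R i).erase 0).card = (R i).card - 1 := Finset.card_erase_of_mem h0R
      have h3 : (R i).card = q ^ i := hcardR i hi hiN
      have h4 : 1 ≤ q ^ i := Nat.one_le_pow _ _ (by omega)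
      omega
    -- fibers over B have size at most m
    have hfiberB : ∀ g ∈ B, (ℬ.filter (fun x => μ x = g)).card ≤ m := by
      intro g hg
      simp only [hBdef, Finset.mem_image] at hg
      obtain ⟨x0, hx0, rfl⟩ := hg
      simp only [hℬdef, Finset.mem_filter] at hx0
      have hsub : ℬ.filter (fun x => μ x = μ x0) ⊆ Rt (μ x0) := by
        intro x hx
        simp only [Finset.mem_filter] at hx
        rw [hRtmem]
        refine ⟨(Polynomial.map_ne_zero_iff ι.injective).mpr
          (minpoly.irreducible (hintK x0)).ne_zero, ?_⟩
        rw [← hx.2]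
        exact minpoly.aeval F x
      calc (ℬ.filter (fun x => μ x = μ x0)).card ≤ (Rt (μ x0)).card := Finset.card_le_card hsub
        _ ≤ (μ x0).natDegree := by
            refine (Multiset.toFinset_card_le _).trans ((card_roots' _).trans ?_)
            rw [natDegree_map]
        _ = m := hx0.2
    have hBcount : ℬ.card ≤ B.card * m := by
      rw [Finset.card_eq_sum_card_image μ ℬ, ← hBdef]
      calc ∑ g ∈ B, (ℬ.filter (fun x => μ x = g)).card ≤ ∑ g ∈ B, m :=
            Finset.sum_le_sum hfiberB
        _ = B.card * m := by rw [Finset.sum_const, smul_eq_mul]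
    -- complement of ℬ in R m is covered by proper-divisor root sets
    have hcomp : R m \ ℬ ⊆ (m.properDivisors).biUnion R := by
      intro x hx
      simp only [Finset.mem_sdiff, hℬdef, Finset.mem_filter, not_and] at hx
      obtain ⟨hxR, hxdeg⟩ := hx
      have hxpow : x ^ q ^ m = x := (hmemR m (by omega) x).mp hxR
      obtain ⟨hdvd, hpow⟩ := minpoly_deg_dvd (by omega : 1 ≤ m) hxpow
      set e := (minpoly F x).natDegree with hedef
      have he1 : 1 ≤ e := minpoly.natDegree_pos (hintK x)
      have hem : e ≠ m := fun h => (hxdeg hxR) h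
      have helt : e < m := lt_of_le_of_ne (Nat.le_of_dvd (by omega) hdvd) hem
      rw [Finset.mem_biUnion]
      exact ⟨e, Nat.mem_properDivisors.mpr ⟨hdvd, helt⟩, (hmemR e he1 x).mpr hpow⟩
    have hScard : ((m.properDivisors).biUnion R).card ≤ ∑ e ∈ m.properDivisors, q ^ e := by
      refine (Finset.card_biUnion_le).trans (Finset.sum_le_sum ?_)
      intro e he
      rw [Nat.mem_properDivisors] at he
      have he1 : 1 ≤ e := Nat.pos_of_ne_zero (fun h => by
        subst h; have := Nat.eq_zero_of_zero_dvd he.1; omega)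
      exact hcardRle e he1
    have hBlow : q ^ m ≤ B.card * m + ∑ e ∈ m.properDivisors, q ^ e := by
      have h1 : (R m).card ≤ (R m \ ℬ).card + ℬ.card := Finset.card_le_card_sdiff_add_card
      have h2 : (R m \ ℬ).card ≤ ∑ e ∈ m.properDivisors, q ^ e :=
        (Finset.card_le_card hcomp).trans hScard
      have h3 : (R m).card = q ^ m := hcardR m (by omega) hmN
      omega
    -- bound the proper-divisor sum
    have hSle : (∑ e ∈ m.properDivisors, q ^ e) + q ≤ 2 * q ^ (m / 2) := by
      have hsub : m.properDivisors ⊆ Finset.Icc 1 (m / 2) := by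
        intro e he
        rw [Nat.mem_properDivisors] at he
        obtain ⟨⟨c, hc⟩, hlt⟩ := he
        rw [Finset.mem_Icc]
        have he1 : 1 ≤ e := by
          rcases Nat.eq_zero_or_pos e with h | h
          · subst h; simp at hc; omega
          · exact h
        have hc2 : 2 ≤ c := by
          rcases (show c = 0 ∨ c = 1 ∨ 2 ≤ c by omega) with h | h | h
          · subst h; omega
          · subst h; omega
          · exact h
        have : e * 2 ≤ m := by calc e * 2 ≤ e * c := Nat.mul_le_mul_left _ hc2
                                  _ = m := hc.symm
        exact ⟨he1, Nat.le_div_iff_mul_le (by omega) |>.mpr this⟩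
      have h1 : (∑ e ∈ m.properDivisors, q ^ e) ≤ ∑ e ∈ Finset.Icc 1 (m / 2), q ^ e :=
        Finset.sum_le_sum_of_subset hsub
      have h2 := geomsum_le q (m / 2) hq (by omega)
      omega
    -- final arithmetic
    have hMAIN := MAIN q i m hq hi him
    have f1 : m * (A.card * i + 1) ≤ m * q ^ i := Nat.mul_le_mul_left m hAle
    have f2 : i * q ^ m ≤ i * (B.card * m + ∑ e ∈ m.properDivisors, q ^ e) :=
      Nat.mul_le_mul_left i hBlow
    have f3 : i * ((∑ e ∈ m.properDivisors, q ^ e) + q) ≤ i * (2 * q ^ (m / 2)) :=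
      Nat.mul_le_mul_left i hSle
    have goalM : A.card * (i * m) ≤ B.card * (i * m) := by nlinarith [f1, f2, f3, hMAIN]
    exact Nat.le_of_mul_le_mul_right goalM (by positivity)

lemma coprime_of_ne {F : Type*} [Field F] {g h : F[X]} (hgm : g.Monic) (hgi : Irreducible g)
    (hhm : h.Monic) (hhi : Irreducible h) (hne : g ≠ h) : IsCoprime g h :=
  hgi.coprime_iff_not_dvd.mpr fun hdvd =>
    hne (eq_of_monic_of_associated hgm hhm (hgi.associated_of_dvd hhi hdvd))

end PairAux

open PairAux in
theorem pairing_construction (F : Type*) [Field F] [Fintype F] (n i : ℕ) (hn : 2 ≤ n)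
    (hi1 : 1 ≤ i) (hi2 : i ≤ (n - 1) / 2) :
    ∃ φ : F[X] → F[X],
      (∀ g ∈ {g : F[X] | g.Monic ∧ Irreducible g ∧ g.natDegree = i ∧ g ≠ X},
        (φ g).Monic ∧ Irreducible (φ g) ∧ (φ g).natDegree = n - i) ∧
      Set.InjOn φ {g : F[X] | g.Monic ∧ Irreducible g ∧ g.natDegree = i ∧ g ≠ X} ∧
      (∀ g ∈ {g : F[X] | g.Monic ∧ Irreducible g ∧ g.natDegree = i ∧ g ≠ X},
        (g * φ g).Monic ∧ (g * φ g).natDegree = n ∧ (g * φ g).eval 0 ≠ 0) ∧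
      (∀ g ∈ {g : F[X] | g.Monic ∧ Irreducible g ∧ g.natDegree = i ∧ g ≠ X},
        ∀ g' ∈ {g : F[X] | g.Monic ∧ Irreducible g ∧ g.natDegree = i ∧ g ≠ X},
          g ≠ g' → IsCoprime (g * φ g) (g' * φ g')) ∧
      (∀ g ∈ {g : F[X] | g.Monic ∧ Irreducible g ∧ g.natDegree = i ∧ g ≠ X},
        ∀ p : F[X], p.Monic → Irreducible p → p.natDegree = n →
          IsCoprime (g * φ g) p) := by
  classical
  set m := n - i with hmdef
  have him : i + 1 ≤ m := by omega
  have hmn : i + m = n := by omega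
  obtain ⟨A, B, hAset, hB, hcard⟩ := exists_finsets F i m hi1 him
  -- build an embedding from A into B
  have hcard' : Fintype.card {x // x ∈ A} ≤ Fintype.card {x // x ∈ B} := by
    rwa [Fintype.card_coe, Fintype.card_coe]
  obtain ⟨emb⟩ := Function.Embedding.nonempty_of_card_le hcard'
  set S : Set F[X] := {g : F[X] | g.Monic ∧ Irreducible g ∧ g.natDegree = i ∧ g ≠ X} with hSdef
  have hmemA : ∀ g, g ∈ S ↔ g ∈ A := by
    intro g
    rw [← hAset]; rfl
  set φ : F[X] → F[X] := fun g => if h : g ∈ A then (emb ⟨g, h⟩ : F[X]) else 1 with hφdef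
  have hφval : ∀ g (h : g ∈ A), φ g = (emb ⟨g, h⟩ : F[X]) := by
    intro g h; simp only [hφdef, dif_pos h]
  have hφB : ∀ g (h : g ∈ A), (φ g).Monic ∧ Irreducible (φ g) ∧ (φ g).natDegree = m := by
    intro g h
    rw [hφval g h]
    exact hB _ (emb ⟨g, h⟩).2
  have hφX : ∀ g (h : g ∈ A), φ g ≠ X := by
    intro g h hX
    have := (hφB g h).2.2
    rw [hX, natDegree_X] at this
    omega
  refine ⟨φ, ?_, ?_, ?_, ?_, ?_⟩
  · intro g hg
    exact (hφB g ((hmemA g).mp hg))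
  · intro g hg g' hg' heq
    have hgA := (hmemA g).mp hg
    have hgA' := (hmemA g').mp hg'
    rw [hφval g hgA, hφval g' hgA'] at heq
    have := emb.injective (Subtype.ext heq)
    exact congrArg Subtype.val this
  · intro g hg
    have hgA := (hmemA g).mp hg
    obtain ⟨hgm, hgi, hgdeg, hgX⟩ := hg
    obtain ⟨hpm, hpi, hpdeg⟩ := hφB g hgA
    refine ⟨hgm.mul hpm, ?_, ?_⟩
    · rw [natDegree_mul hgi.ne_zero hpi.ne_zero, hgdeg, hpdeg]; omega
    · rw [eval_mul]
      exact mul_ne_zero (eval_zero_ne hgm hgi hgX) (eval_zero_ne hpm hpi (hφX g hgA))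
  · intro g hg g' hg' hne
    have hgA := (hmemA g).mp hg
    have hgA' := (hmemA g').mp hg'
    obtain ⟨hgm, hgi, hgdeg, hgX⟩ := hg
    obtain ⟨hgm', hgi', hgdeg', hgX'⟩ := hg'
    obtain ⟨hpm, hpi, hpdeg⟩ := hφB g hgA
    obtain ⟨hpm', hpi', hpdeg'⟩ := hφB g' hgA'
    have hφne : φ g ≠ φ g' := by
      intro heq
      rw [hφval g hgA, hφval g' hgA'] at heq
      exact hne (congrArg Subtype.val (emb.injective (Subtype.ext heq)))
    have c1 : IsCoprime g g' := coprime_of_ne hgm hgi hgm' hgi' hne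
    have c2 : IsCoprime g (φ g') := coprime_of_ne hgm hgi hpm' hpi'
      (fun h => by rw [h] at hgdeg; omega)
    have c3 : IsCoprime (φ g) g' := coprime_of_ne hpm hpi hgm' hgi'
      (fun h => by rw [h] at hpdeg; omega)
    have c4 : IsCoprime (φ g) (φ g') := coprime_of_ne hpm hpi hpm' hpi' hφne
    exact (c1.mul_right c2).mul_left (c3.mul_right c4)
  · intro g hg p hpmon hpirr hpdeg
    have hgA := (hmemA g).mp hg
    obtain ⟨hgm, hgi, hgdeg, hgX⟩ := hg
    obtain ⟨hqm, hqi, hqdeg⟩ := hφB g hgA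
    have c1 : IsCoprime g p := coprime_of_ne hgm hgi hpmon hpirr
      (fun h => by rw [h] at hgdeg; omega)
    have c2 : IsCoprime (φ g) p := coprime_of_ne hqm hqi hpmon hpirr
      (fun h => by rw [h] at hqdeg; omega)
    exact c1.mul_left c2
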